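/- Let E_2 be the two-dimensional complex evolution algebra with structural matrix ((1,0),(1,0)) (i.e. e₁e₁ = e₁, e₂e₂ = e₁). A linear map P : ℂ² → ℂ² is a Rota–Baxter operator of weight 0 on E_2 if and only if there exists c ∈ ℂ such that P has matrix ((0,0),(c, i·c)) or matrix ((0,0),(c, −i·c)), i.e. P(e₁) = 0 and P(e₂) = c e₁ ± i c e₂. -/
import Mathlib


/-- The evolution-algebra product on `ℂ²` determined by a structural matrix `A`:
`e_i · e_i = a_{i1} e₁ + a_{i2} e₂` and `e₁ · e₂ = e₂ · e₁ = 0`. -/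
noncomputable def evMulC (A : Matrix (Fin 2) (Fin 2) ℂ) (x y : Fin 2 → ℂ) : Fin 2 → ℂ :=
  fun k => x 0 * y 0 * A 0 k + x 1 * y 1 * A 1 k

/-- `P` is a Rota–Baxter operator of weight `lam` on the evolution algebra with structural
matrix `A`: `P(x)·P(y) = P(x·P(y) + P(x)·y + lam x·y)` for all `x, y`. -/
def IsRotaBaxter (A : Matrix (Fin 2) (Fin 2) ℂ) (lam : ℂ)
    (P : (Fin 2 → ℂ) →ₗ[ℂ] (Fin 2 → ℂ)) : Prop :=
  ∀ x y : Fin 2 → ℂ,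
    evMulC A (P x) (P y) = P (evMulC A x (P y) + evMulC A (P x) y + lam • evMulC A x y)

lemma decompC (x : Fin 2 → ℂ) : x = x 0 • ![1,0] + x 1 • ![0,1] := by
  funext i; fin_cases i <;> simp

/-- Rota–Baxter operators of weight 0 on `E₂` (`e₁e₁ = e₁, e₂e₂ = e₁`) are
exactly those with matrix `((0,0),(c, ±ic))`. -/
theorem rb_weight0_E2 (P : (Fin 2 → ℂ) →ₗ[ℂ] (Fin 2 → ℂ)) :
    IsRotaBaxter !![1, 0; 1, 0] 0 P ↔
      ∃ c : ℂ, P ![1, 0] = ![0, 0] ∧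
        (P ![0, 1] = ![c, Complex.I * c] ∨ P ![0, 1] = ![c, -Complex.I * c]) := by
  constructor
  · intro h
    set a := P ![1,0] 0 with ha
    set b := P ![1,0] 1 with hb
    set c := P ![0,1] 0 with hc
    set d := P ![0,1] 1 with hd
    have h1 := h ![1,0] ![1,0]
    have harg : evMulC !![1,0;1,0] ![1,0] (P ![1,0]) + evMulC !![1,0;1,0] (P ![1,0]) ![1,0]
        + (0:ℂ) • evMulC !![1,0;1,0] ![1,0] ![1,0] = (2*a) • ![1,0] := by
      funext k; fin_cases k <;> simp [evMulC] <;> ring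
    rw [harg, map_smul] at h1
    have h10 := congrFun h1 0
    have h11 := congrFun h1 1
    simp [evMulC, ← ha, ← hb] at h10 h11
    have hab : a = 0 ∧ b = 0 := by
      rcases h11 with h11 | h11
      · refine ⟨h11, ?_⟩
        have : b * b = 0 := by linear_combination h10 + a*h11
        simpa [mul_self_eq_zero] using this
      · refine ⟨?_, h11⟩
        have : a * a = 0 := by linear_combination -h10 + b*h11
        simpa [mul_self_eq_zero] using this
    have hP1 : P ![1,0] = ![0,0] := by
      funext i; fin_cases i
      · simpa using hab.1
      · simpa using hab.2
    have h2 := h ![0,1] ![0,1]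
    have harg2 : evMulC !![1,0;1,0] ![0,1] (P ![0,1]) + evMulC !![1,0;1,0] (P ![0,1]) ![0,1]
        + (0:ℂ) • evMulC !![1,0;1,0] ![0,1] ![0,1] = (2*d) • ![1,0] := by
      funext k; fin_cases k <;> simp [evMulC] <;> ring
    rw [harg2, map_smul, hP1] at h2
    have h20 := congrFun h2 0
    simp [evMulC, ← hc, ← hd] at h20
    have hfac : (d - Complex.I * c) * (d + Complex.I * c) = 0 := by
      linear_combination h20 - c * c * Complex.I_sq
    refine ⟨c, hP1, ?_⟩
    rcases mul_eq_zero.mp hfac with hf | hf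
    · left
      funext i; fin_cases i
      · simpa using hc.symm
      · have : d = Complex.I * c := by linear_combination hf
        simpa [← hd] using this
    · right
      funext i; fin_cases i
      · simpa using hc.symm
      · have : d = -Complex.I * c := by linear_combination hf
        simpa [← hd] using this
  · rintro ⟨c, hP1, h2⟩
    have hP1' : P ![1,0] = 0 := by rw [hP1]; funext i; fin_cases i <;> simp
    have hPz : ∀ z : Fin 2 → ℂ, P z = z 1 • P ![0,1] := by
      intro z
      conv_lhs => rw [decompC z]
      rw [map_add, map_smul, map_smul, hP1']
      simp
    have key : ∀ u : Fin 2 → ℂ, u 1 = 0 → P u = 0 := by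
      intro u hu; rw [hPz u, hu, zero_smul]
    rcases h2 with h2 | h2 <;>
    · intro x y
      have hR : P (evMulC !![1,0;1,0] x (P y) + evMulC !![1,0;1,0] (P x) y
          + (0:ℂ) • evMulC !![1,0;1,0] x y) = 0 := by
        apply key; simp [evMulC]
      rw [hR, hPz x, hPz y, h2]
      funext k
      fin_cases k <;> simp [evMulC]
      linear_combination x 1 * y 1 * c * c * Complex.I_sq
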